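/- Let η: A → M_n(k[x_D | D ∈ P]) be the perfect-matching homomorphism of a dimer algebra A with P nonempty, and let p, q ∈ e_j A e_i be distinct paths whose lifts to the universal cover have coincident tails and coincident heads. If η̄(p) = η̄(q), then p, q form a non-cancellative pair: there exists m ≥ 0 such that p·σ_i^m = q·σ_i^m ≠ 0. -/

import Mathlib

/-- If P ≠ ∅ and p, q are distinct paths (with η̄(p) ≠ 0) whose lifts have
coincident tails and heads (so that p·σ_i^m = q·σ_i^n for some m, n ≥ 0) and
η(p) = η(q), then p, q is a non-cancellative pair: there is m ≥ 0 with
p·σ_i^m = q·σ_i^m ≠ 0. -/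
theorem stmt_18 {k A P : Type} [Field k] [Fintype P] [Nonempty P]
    [Ring A] [Algebra k A] {n : ℕ}
    (η : A →ₐ[k] Matrix (Fin n) (Fin n) (MvPolynomial P k))
    (i j : Fin n) (σi p q : A) (bp : MvPolynomial P k)
    (hσ : η σi = Matrix.single i i (∏ D : P, MvPolynomial.X D))
    (hp : η p = Matrix.single j i bp)
    (hbp : bp ≠ 0)
    (hpq : p ≠ q)
    (hηeq : η p = η q)
    (hlift : ∃ m nn : ℕ, p * σi ^ m = q * σi ^ nn) :
    ∃ m : ℕ, p * σi ^ m = q * σi ^ m ∧ p * σi ^ m ≠ 0 := by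
  obtain ⟨m, nn, heq⟩ := hlift
  set σ : MvPolynomial P k := ∏ D : P, MvPolynomial.X D with hσdef
  have key : ∀ (r : A), η r = Matrix.single j i bp →
      ∀ t : ℕ, η (r * σi ^ t) = Matrix.single j i (bp * σ ^ t) := by
    intro r hr t
    induction t with
    | zero => simp [hr]
    | succ t ih =>
      rw [pow_succ, ← mul_assoc, map_mul, ih, hσ,
        Matrix.single_mul_single_same, pow_succ, mul_assoc]
  have hm := key p hp m
  have hnn := key q (hηeq ▸ hp) nn
  have hcongr : bp * σ ^ m = bp * σ ^ nn := by
    have := congrArg (fun M => M j i) (hm ▸ hnn ▸ congrArg η heq)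
    simpa [Matrix.single_apply_same] using this
  have hσeq : (σ : MvPolynomial P k) ^ m = σ ^ nn := mul_left_cancel₀ hbp hcongr
  -- show m = nn using degrees via evaluation into Polynomial k
  have hmn : m = nn := by
    have hmap := congrArg (MvPolynomial.aeval (fun _ : P => (Polynomial.X : Polynomial k))) hσeq
    have hσmap : (MvPolynomial.aeval (fun _ : P => (Polynomial.X : Polynomial k))) σ
        = Polynomial.X ^ Fintype.card P := by
      simp [hσdef, Finset.prod_const, Finset.card_univ]
    rw [map_pow, map_pow, hσmap, ← pow_mul, ← pow_mul] at hmap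
    have := Polynomial.natDegree_eq_of_degree_eq (congrArg Polynomial.degree hmap)
    rw [Polynomial.natDegree_X_pow, Polynomial.natDegree_X_pow] at this
    have hc : 0 < Fintype.card P := Fintype.card_pos
    exact Nat.eq_of_mul_eq_mul_left hc this
  subst hmn
  refine ⟨m, heq, fun h0 => ?_⟩
  have : (0 : Matrix (Fin n) (Fin n) (MvPolynomial P k)) = Matrix.single j i (bp * σ ^ m) := by
    rw [← hm, h0, map_zero]
  have hz := congrArg (fun M => M j i) this
  simp only [Matrix.single_apply_same, Matrix.zero_apply] at hz
  exact hbp (by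
    have : bp * σ ^ m = 0 := hz.symm
    rcases mul_eq_zero.mp this with h | h
    · exact h
    · exact absurd h (pow_ne_zero _ (by
        simp only [hσdef]
        exact Finset.prod_ne_zero_iff.mpr fun D _ => MvPolynomial.X_ne_zero D)))
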